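/- Let G be a loopless multigraph with vertex set V, |V| = n, and edges e_1, …, e_m (unordered pairs of distinct vertices, parallel edges allowed), let Δ be the maximum degree of G, and let G' = (A, B, F) be the bipartite graph constructed as follows: A = V; for each vertex v, B contains a set S_v of exactly Δ vertices, consisting of one vertex v_{(i)} for each edge index i with v ∈ e_i together with Δ − deg(v) additional filler vertices, and B is the disjoint union of the sets S_v; F contains the edge {v, w} for every v ∈ A and every w ∈ S_v, and additionally, for every edge e_i = {u_i, v_i} of G, the edges {u_i, (v_i)_{(i)}} and {v_i, (u_i)_{(i)}}. Then for every natural number k, the following are equivalent: (i) G admits a linear arrangement of cost at most k; (ii) there exists F' ⊆ (A × B) ∖ F with |F'| + 2m ≤ k + Δ·n·(n−1)/2 such that (A, B, F ∪ F') is a chain graph. -/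

import Mathlib

open Finset

def Inc {V : Type*} {m : ℕ} (E : Fin m → V × V) (v : V) (i : Fin m) : Prop :=
  (E i).1 = v ∨ (E i).2 = v

def mdeg {V : Type*} [DecidableEq V] {m : ℕ} (E : Fin m → V × V) (v : V) : ℕ :=
  (Finset.univ.filter fun i => (E i).1 = v ∨ (E i).2 = v).card

def maxDeg {V : Type*} [Fintype V] [DecidableEq V] {m : ℕ} (E : Fin m → V × V) : ℕ :=
  Finset.univ.sup (mdeg E)

def Bvert {V : Type*} [Fintype V] [DecidableEq V] {m : ℕ} (E : Fin m → V × V) : Type _ :=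
  Σ v : V, ({i : Fin m // Inc E v i} ⊕ Fin (maxDeg E - mdeg E v))

def Frel {V : Type*} [Fintype V] [DecidableEq V] {m : ℕ} (E : Fin m → V × V)
    (a : V) (w : Bvert E) : Prop :=
  w.1 = a ∨ ∃ (i : Fin m) (h : Inc E w.1 i),
    w.2 = Sum.inl ⟨i, h⟩ ∧
      (((E i).1 = a ∧ (E i).2 = w.1) ∨ ((E i).1 = w.1 ∧ (E i).2 = a))

section Helpers
variable {V : Type*} [Fintype V] [DecidableEq V] {m : ℕ} (E : Fin m → V × V)

instance (v : V) (i : Fin m) : Decidable (Inc E v i) :=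
  inferInstanceAs (Decidable (_ ∨ _))

instance : Fintype (Bvert E) := by unfold Bvert; infer_instance

instance : DecidableEq (Bvert E) := by unfold Bvert; exact Sigma.instDecidableEqSigma

instance (a : V) (w : Bvert E) : Decidable (Frel E a w) := by
  unfold Frel; infer_instance

lemma frel_inr (a x : V) (j : Fin (maxDeg E - mdeg E x)) :
    Frel E a (⟨x, Sum.inr j⟩ : Bvert E) ↔ x = a := by
  unfold Frel; simp

lemma frel_inl (a x : V) (i : Fin m) (h : Inc E x i) :
    Frel E a (⟨x, Sum.inl ⟨i, h⟩⟩ : Bvert E) ↔ ((E i).1 = a ∨ (E i).2 = a) := by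
  unfold Frel
  simp only [Sum.inl.injEq, Subtype.mk.injEq]
  constructor
  · rintro (rfl | ⟨i', h', hEq, hcase⟩)
    · exact h
    · subst hEq; tauto
  · rintro (hc | hc)
    · rcases id h with h1 | h1
      · exact Or.inl (h1 ▸ hc)
      · exact Or.inr ⟨i, h, rfl, Or.inl ⟨hc, h1⟩⟩
    · rcases id h with h1 | h1
      · exact Or.inr ⟨i, h, rfl, Or.inr ⟨h1, hc⟩⟩
      · exact Or.inl (h1 ▸ hc)

lemma mdeg_le (x : V) : mdeg E x ≤ maxDeg E := Finset.le_sup (mem_univ x)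

lemma inc_filter_eq (i : Fin m) :
    (univ.filter fun x : V => Inc E x i) = {(E i).1, (E i).2} := by
  ext x
  simp [Inc, mem_insert, mem_singleton, eq_comm]

lemma sum_sigma_sum {ι : Type*} [Fintype ι] (α β : ι → Type*)
    [∀ i, Fintype (α i)] [∀ i, Fintype (β i)] (g : (Σ i, α i ⊕ β i) → ℕ) :
    ∑ w, g w = ∑ x, ((∑ i : α x, g ⟨x, Sum.inl i⟩) + ∑ j : β x, g ⟨x, Sum.inr j⟩) := by
  rw [← Finset.univ_sigma_univ, Finset.sum_sigma]
  exact Finset.sum_congr rfl fun x _ => Fintype.sum_sum_type _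

lemma sum_bvert (f : Bvert E → ℕ) :
    ∑ w : Bvert E, f w = ∑ x : V,
      ((∑ i : {i : Fin m // Inc E x i}, f ⟨x, Sum.inl i⟩) +
       ∑ j : Fin (maxDeg E - mdeg E x), f ⟨x, Sum.inr j⟩) :=
  sum_sigma_sum (fun x => {i : Fin m // Inc E x i}) (fun x => Fin (maxDeg E - mdeg E x)) f

lemma sub_to_filter (x : V) (f : Fin m → ℕ) :
    ∑ i : {i : Fin m // Inc E x i}, f i.val = ∑ i ∈ univ.filter (fun i => Inc E x i), f i :=
  (Finset.sum_subtype _ (by simp) f).symm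

lemma swap_inc (F : V → Fin m → ℕ) (hloop : ∀ i, (E i).1 ≠ (E i).2) :
    ∑ x : V, ∑ i ∈ univ.filter (fun i => Inc E x i), F x i
      = ∑ i : Fin m, (F (E i).1 i + F (E i).2 i) := by
  simp only [Finset.sum_filter]
  rw [Finset.sum_comm]
  refine Finset.sum_congr rfl fun i _ => ?_
  rw [← Finset.sum_filter, inc_filter_eq, Finset.sum_pair (hloop i)]

lemma mdeg_card_subtype (x : V) :
    Fintype.card {i : Fin m // Inc E x i} = mdeg E x := by
  rw [Fintype.card_subtype]; rfl

lemma sum_mdeg (hloop : ∀ i, (E i).1 ≠ (E i).2) :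
    ∑ x : V, mdeg E x = 2 * m := by
  have := swap_inc E (fun _ _ => 1) hloop
  simp only [Finset.sum_const, smul_eq_mul, mul_one] at this
  have h2 : ∀ x : V, (univ.filter fun i => Inc E x i).card = mdeg E x := fun x => rfl
  simp only [h2] at this
  simp only [Finset.sum_const, card_univ, Fintype.card_fin, smul_eq_mul] at this
  omega

end Helpers

section Counting
variable {V : Type*} [Fintype V] [DecidableEq V] {m : ℕ} (E : Fin m → V × V)
instance (a x : V) (s : {i : Fin m // Inc E x i} ⊕ Fin (maxDeg E - mdeg E x)) :
    Decidable (Frel E a ⟨x, s⟩) := by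
  unfold Frel; infer_instance

lemma card_pos_ge {n : ℕ} (σ : V ≃ Fin n) (c : ℕ) :
    (univ.filter fun v => c ≤ (σ v : ℕ)).card = n - c := by
  have himg : ((univ.filter fun v => c ≤ (σ v : ℕ)).image fun v => ((σ v : ℕ)))
      = Finset.Ico c n := by
    ext j
    simp only [Finset.mem_image, Finset.mem_filter, Finset.mem_univ, true_and,
      Finset.mem_Ico]
    constructor
    · rintro ⟨v, hv, rfl⟩; exact ⟨hv, (σ v).isLt⟩
    · rintro ⟨h1, h2⟩; exact ⟨σ.symm ⟨j, h2⟩, by simp [h1], by simp⟩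
  calc (univ.filter fun v => c ≤ (σ v : ℕ)).card
      = ((univ.filter fun v => c ≤ (σ v : ℕ)).image fun v => ((σ v : ℕ))).card :=
        (Finset.card_image_of_injective _ (Fin.val_injective.comp σ.injective)).symm
    _ = (Finset.Ico c n).card := by rw [himg]
    _ = n - c := Nat.card_Ico c n

lemma sum_npos {n : ℕ} (σ : V ≃ Fin n) :
    ∑ v : V, (n - (σ v : ℕ)) = n * (n - 1) / 2 + n := by
  rw [Equiv.sum_comp σ (fun p : Fin n => n - (p : ℕ)), Fin.sum_univ_eq_sum_range]
  rw [← Finset.sum_range_reflect]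
  rw [Finset.sum_congr rfl (fun j hj => show n - (n - 1 - j) = j + 1 by
    simp only [Finset.mem_range] at hj; omega)]
  rw [Finset.sum_add_distrib, Finset.sum_range_id, Finset.sum_const, card_range,
    smul_eq_mul, mul_one]

lemma sum_mdeg_mul (hloop : ∀ i, (E i).1 ≠ (E i).2) (g : V → ℕ) :
    ∑ x : V, mdeg E x * g x = ∑ i : Fin m, (g (E i).1 + g (E i).2) := by
  have h := swap_inc E (fun x _ => g x) hloop
  simp only [Finset.sum_const, smul_eq_mul] at h
  have h2 : ∀ x : V, (univ.filter fun i => Inc E x i).card = mdeg E x := fun x => rfl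
  simp only [h2] at h
  exact h

lemma card_frel_inr (x : V) (j : Fin (maxDeg E - mdeg E x)) :
    (univ.filter fun a : V => Frel E a ⟨x, Sum.inr j⟩).card = 1 := by
  rw [show (univ.filter fun a : V => Frel E a ⟨x, Sum.inr j⟩) = {x} from by
    ext a; simp [frel_inr E, eq_comm]]
  exact Finset.card_singleton x

lemma card_frel_inl (hloop : ∀ i, (E i).1 ≠ (E i).2) (x : V) (i : Fin m) (h : Inc E x i) :
    (univ.filter fun a : V => Frel E a ⟨x, Sum.inl ⟨i, h⟩⟩).card = 2 := by
  rw [show (univ.filter fun a : V => Frel E a ⟨x, Sum.inl ⟨i, h⟩⟩) = {(E i).1, (E i).2} from by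
    ext a; simp [frel_inl E, eq_comm]]
  exact Finset.card_pair (hloop i)

lemma fset_card (hloop : ∀ i, (E i).1 ≠ (E i).2) :
    (univ.filter fun q : V × Bvert E => Frel E q.1 q.2).card
      = maxDeg E * Fintype.card V + 2 * m := by
  rw [Finset.card_filter, Fintype.sum_prod_type_right]
  rw [Finset.sum_congr rfl fun w (_ : w ∈ (univ : Finset (Bvert E))) =>
    ((Finset.card_filter (fun a : V => Frel E a w) univ).symm :
      (∑ v : V, if Frel E v w then 1 else 0) = _)]
  rw [sum_bvert E (fun w => (univ.filter fun a : V => Frel E a w).card)]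
  have e1 : ∀ x : V, (∑ i : {i : Fin m // Inc E x i},
      (univ.filter fun a : V => Frel E a ⟨x, Sum.inl i⟩).card) = mdeg E x * 2 := by
    intro x
    rw [Finset.sum_congr rfl fun i _ =>
      (card_frel_inl E hloop x i.1 i.2 :
        (univ.filter fun a : V => Frel E a ⟨x, Sum.inl i⟩).card = 2)]
    rw [Finset.sum_const, card_univ, mdeg_card_subtype, smul_eq_mul]
  have e2 : ∀ x : V, (∑ j : Fin (maxDeg E - mdeg E x),
      (univ.filter fun a : V => Frel E a ⟨x, Sum.inr j⟩).card) = maxDeg E - mdeg E x := by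
    intro x
    rw [Finset.sum_congr rfl fun j _ => card_frel_inr E x j]
    rw [Finset.sum_const, card_univ, Fintype.card_fin, smul_eq_mul, mul_one]
  rw [Finset.sum_congr rfl fun x _ => congrArg₂ (· + ·) (e1 x) (e2 x)]
  have e3 : ∀ x : V, mdeg E x * 2 + (maxDeg E - mdeg E x) = maxDeg E + mdeg E x := by
    intro x; have := mdeg_le E x; omega
  rw [Finset.sum_congr rfl fun x _ => e3 x, Finset.sum_add_distrib, Finset.sum_const,
    card_univ, smul_eq_mul, sum_mdeg E hloop]
  ring

lemma mset_filter_inr {n : ℕ} (σ : V ≃ Fin n) (x : V) (j : Fin (maxDeg E - mdeg E x)) :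
    (univ.filter fun v : V =>
        ∃ u, (σ u : ℕ) ≤ (σ v : ℕ) ∧ Frel E u ⟨x, Sum.inr j⟩).card = n - (σ x : ℕ) := by
  rw [show (univ.filter fun v : V => ∃ u, (σ u : ℕ) ≤ (σ v : ℕ) ∧ Frel E u ⟨x, Sum.inr j⟩)
      = univ.filter (fun v => ((σ x : ℕ)) ≤ (σ v : ℕ)) from ?_]
  · exact card_pos_ge σ _
  · ext v
    simp only [mem_filter, mem_univ, true_and, frel_inr E]
    constructor
    · rintro ⟨u, hu, rfl⟩; exact hu
    · intro h; exact ⟨x, h, rfl⟩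

lemma mset_filter_inl {n : ℕ} (σ : V ≃ Fin n) (x : V) (i : {i : Fin m // Inc E x i}) :
    (univ.filter fun v : V =>
        ∃ u, (σ u : ℕ) ≤ (σ v : ℕ) ∧ Frel E u ⟨x, Sum.inl i⟩).card
      = n - min ((σ (E i.1).1 : ℕ)) ((σ (E i.1).2 : ℕ)) := by
  rw [show (univ.filter fun v : V => ∃ u, (σ u : ℕ) ≤ (σ v : ℕ) ∧ Frel E u ⟨x, Sum.inl i⟩)
      = univ.filter (fun v => min ((σ (E i.1).1 : ℕ)) ((σ (E i.1).2 : ℕ)) ≤ (σ v : ℕ)) from ?_]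
  · exact card_pos_ge σ _
  · ext v
    simp only [mem_filter, mem_univ, true_and]
    constructor
    · rintro ⟨u, hu, hf⟩
      rcases (frel_inl E u x i.1 i.2).mp hf with h1 | h1
      · calc min ((σ (E i.1).1 : ℕ)) ((σ (E i.1).2 : ℕ)) ≤ (σ (E i.1).1 : ℕ) :=
            min_le_left _ _
          _ = (σ u : ℕ) := by rw [h1]
          _ ≤ _ := hu
      · calc min ((σ (E i.1).1 : ℕ)) ((σ (E i.1).2 : ℕ)) ≤ (σ (E i.1).2 : ℕ) :=
            min_le_right _ _
          _ = (σ u : ℕ) := by rw [h1]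
          _ ≤ _ := hu
    · intro hmin
      rcases le_total ((σ (E i.1).1 : ℕ)) ((σ (E i.1).2 : ℕ)) with hle | hle
      · refine ⟨(E i.1).1, ?_, (frel_inl E _ x i.1 i.2).mpr (Or.inl rfl)⟩
        rw [min_eq_left hle] at hmin; exact hmin
      · refine ⟨(E i.1).2, ?_, (frel_inl E _ x i.1 i.2).mpr (Or.inr rfl)⟩
        rw [min_eq_right hle] at hmin; exact hmin

lemma mset_card (hloop : ∀ i, (E i).1 ≠ (E i).2) {n : ℕ} (σ : V ≃ Fin n) :
    (univ.filter fun q : V × Bvert E =>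
        ∃ u, (σ u : ℕ) ≤ (σ q.1 : ℕ) ∧ Frel E u q.2).card
      = maxDeg E * (n * (n - 1) / 2 + n)
        + ∑ i : Fin m, (((σ (E i).1 : ℕ) : ℤ) - ((σ (E i).2 : ℕ) : ℤ)).natAbs := by
  rw [Finset.card_filter, Fintype.sum_prod_type_right]
  rw [Finset.sum_congr rfl fun w (_ : w ∈ (univ : Finset (Bvert E))) =>
    ((Finset.card_filter (fun v : V => ∃ u, (σ u : ℕ) ≤ (σ v : ℕ) ∧ Frel E u w) univ).symm :
      (∑ v : V, if ∃ u, (σ u : ℕ) ≤ (σ v : ℕ) ∧ Frel E u w then 1 else 0) = _)]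
  rw [sum_bvert E (fun w =>
    (univ.filter fun v : V => ∃ u, (σ u : ℕ) ≤ (σ v : ℕ) ∧ Frel E u w).card)]
  have e1 : ∀ x : V, (∑ i : {i : Fin m // Inc E x i},
      (univ.filter fun v : V => ∃ u, (σ u : ℕ) ≤ (σ v : ℕ) ∧ Frel E u ⟨x, Sum.inl i⟩).card)
      = ∑ i ∈ univ.filter (fun i => Inc E x i),
          (n - min ((σ (E i).1 : ℕ)) ((σ (E i).2 : ℕ))) := by
    intro x
    rw [Finset.sum_congr rfl fun i _ => mset_filter_inl E σ x i]
    exact sub_to_filter E x (fun i => n - min ((σ (E i).1 : ℕ)) ((σ (E i).2 : ℕ)))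
  have e2 : ∀ x : V, (∑ j : Fin (maxDeg E - mdeg E x),
      (univ.filter fun v : V => ∃ u, (σ u : ℕ) ≤ (σ v : ℕ) ∧ Frel E u ⟨x, Sum.inr j⟩).card)
      = (maxDeg E - mdeg E x) * (n - (σ x : ℕ)) := by
    intro x
    rw [Finset.sum_congr rfl fun j _ => mset_filter_inr E σ x j]
    rw [Finset.sum_const, card_univ, Fintype.card_fin, smul_eq_mul]
  rw [Finset.sum_congr rfl fun x _ => congrArg₂ (· + ·) (e1 x) (e2 x)]
  rw [Finset.sum_add_distrib]
  rw [swap_inc E (fun _ i => n - min ((σ (E i).1 : ℕ)) ((σ (E i).2 : ℕ))) hloop]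
  have key : ∀ i : Fin m,
      (n - min ((σ (E i).1 : ℕ)) ((σ (E i).2 : ℕ)))
        + (n - min ((σ (E i).1 : ℕ)) ((σ (E i).2 : ℕ)))
      = ((n - (σ (E i).1 : ℕ)) + (n - (σ (E i).2 : ℕ)))
        + (((σ (E i).1 : ℕ) : ℤ) - ((σ (E i).2 : ℕ) : ℤ)).natAbs := by
    intro i
    have h1 := (σ (E i).1).isLt
    have h2 := (σ (E i).2).isLt
    omega
  rw [Finset.sum_congr rfl fun i _ => key i, Finset.sum_add_distrib]
  rw [← sum_mdeg_mul E hloop (fun x => n - (σ x : ℕ))]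
  have e3 : ∑ x : V, mdeg E x * (n - (σ x : ℕ))
      + ∑ i : Fin m, (((σ (E i).1 : ℕ) : ℤ) - ((σ (E i).2 : ℕ) : ℤ)).natAbs
      + ∑ x : V, (maxDeg E - mdeg E x) * (n - (σ x : ℕ))
      = ∑ x : V, maxDeg E * (n - (σ x : ℕ))
        + ∑ i : Fin m, (((σ (E i).1 : ℕ) : ℤ) - ((σ (E i).2 : ℕ) : ℤ)).natAbs := by
    have e4 : ∑ x : V, mdeg E x * (n - (σ x : ℕ))
        + ∑ x : V, (maxDeg E - mdeg E x) * (n - (σ x : ℕ))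
        = ∑ x : V, maxDeg E * (n - (σ x : ℕ)) := by
      rw [← Finset.sum_add_distrib]
      refine Finset.sum_congr rfl fun x _ => ?_
      rw [← add_mul, Nat.add_sub_cancel' (mdeg_le E x)]
    omega
  rw [e3, ← Finset.mul_sum, sum_npos σ]

end Counting

/-- Yannakakis' reduction from `OLA` to `Chain Completion`: for the loopless multigraph
`G` with `n` vertices, edges `e_1, …, e_m` and maximum degree `Δ`, and for every `k`, `G`
admits a linear arrangement of cost at most `k` iff one can add a set `F'` of non-edges
with `|F'| + 2m ≤ k + Δ·n·(n−1)/2` to the bipartite graph `(A, B, F)` of the reduction so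
that `(A, B, F ∪ F')` becomes a chain graph. -/
theorem ola_to_chain_completion {V : Type*} [Fintype V] [DecidableEq V] {m : ℕ}
    (E : Fin m → V × V) (hloop : ∀ i, (E i).1 ≠ (E i).2)
    (n : ℕ) (hn : n = Fintype.card V) (k : ℕ) :
    (∃ π : V ≃ Fin n,
      (∑ i : Fin m, (((π (E i).1 : ℕ) : ℤ) - ((π (E i).2 : ℕ) : ℤ)).natAbs) ≤ k) ↔
    (∃ F' : Finset (V × Bvert E),
      (∀ q ∈ F', ¬ Frel E q.1 q.2) ∧
      F'.card + 2 * m ≤ k + maxDeg E * (n * (n - 1) / 2) ∧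
      ∃ σ : V ≃ Fin n, ∀ u v : V, (σ u : ℕ) ≤ (σ v : ℕ) →
        ∀ w : Bvert E, (Frel E u w ∨ (u, w) ∈ F') → (Frel E v w ∨ (v, w) ∈ F')) := by
  constructor
  · rintro ⟨π, hπ⟩
    set Fs : Finset (V × Bvert E) := univ.filter fun q => Frel E q.1 q.2 with hFs
    set Ms : Finset (V × Bvert E) :=
      univ.filter fun q => ∃ u, (π u : ℕ) ≤ (π q.1 : ℕ) ∧ Frel E u q.2 with hMs
    have hsub : Fs ⊆ Ms := by
      intro q hq
      exact mem_filter.mpr ⟨mem_univ q, q.1, le_refl _, (mem_filter.mp hq).2⟩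
    have hMcard := mset_card E hloop π
    have hFcard := fset_card E hloop
    rw [← hMs] at hMcard
    rw [← hFs] at hFcard
    rw [← hn] at hFcard
    refine ⟨Ms \ Fs, ?_, ?_, π, ?_⟩
    · intro q hq
      have h2 := (mem_sdiff.mp hq).2
      exact fun h => h2 (mem_filter.mpr ⟨mem_univ q, h⟩)
    · rw [card_sdiff_of_subset hsub, hMcard, hFcard]
      have hle : maxDeg E * n + 2 * m ≤ maxDeg E * (n * (n - 1) / 2 + n)
          + ∑ i : Fin m, (((π (E i).1 : ℕ) : ℤ) - ((π (E i).2 : ℕ) : ℤ)).natAbs := by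
        rw [← hMcard, ← hFcard]; exact card_le_card hsub
      rw [mul_add] at hle ⊢
      omega
    · intro u v huv w h
      by_cases hv : Frel E v w
      · exact Or.inl hv
      · right
        refine mem_sdiff.mpr ⟨mem_filter.mpr ⟨mem_univ _, ?_⟩,
          fun hc => hv (mem_filter.mp hc).2⟩
        rcases h with hf | hmem
        · exact ⟨u, huv, hf⟩
        · obtain ⟨u', h1, h2⟩ := (mem_filter.mp (mem_sdiff.mp hmem).1).2
          exact ⟨u', le_trans h1 huv, h2⟩
  · rintro ⟨F', hne, hcard, σ, hchain⟩
    refine ⟨σ, ?_⟩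
    set Fs : Finset (V × Bvert E) := univ.filter fun q => Frel E q.1 q.2 with hFs
    set Ms : Finset (V × Bvert E) :=
      univ.filter fun q => ∃ u, (σ u : ℕ) ≤ (σ q.1 : ℕ) ∧ Frel E u q.2 with hMs
    have hsub : Ms ⊆ Fs ∪ F' := by
      intro q hq
      obtain ⟨u, hu, hf⟩ := (mem_filter.mp hq).2
      rcases hchain u q.1 hu q.2 (Or.inl hf) with h | h
      · exact mem_union_left _ (mem_filter.mpr ⟨mem_univ _, h⟩)
      · exact mem_union_right _ h
    have hMcard := mset_card E hloop σ
    have hFcard := fset_card E hloop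
    rw [← hMs] at hMcard
    rw [← hFs] at hFcard
    rw [← hn] at hFcard
    have h1 : Ms.card ≤ Fs.card + F'.card :=
      le_trans (card_le_card hsub) (card_union_le _ _)
    rw [hMcard, hFcard] at h1
    rw [mul_add] at h1
    omega
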